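/- In the graph G on V with edge-vector adjacency, the graph distance between vertices x and y equals (max_i (x_i − y_i) − min_j (x_j − y_j))/(n+1). -/

import Mathlib

open Finset

/-- The vertex set of the 1-skeleton of the Ã_n Coxeter complex:
integer vectors summing to zero with all pairwise coordinate differences divisible by n+1. -/
def inV (n : ℕ) (x : Fin (n+1) → ℤ) : Prop :=
  (∑ i, x i = 0) ∧ ∀ i j, ((n : ℤ) + 1) ∣ x i - x j

/-- Maximum coordinate. -/
def maxC (n : ℕ) (x : Fin (n+1) → ℤ) : ℤ := univ.sup' univ_nonempty x

/-- Minimum coordinate. -/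
def minC (n : ℕ) (x : Fin (n+1) → ℤ) : ℤ := univ.inf' univ_nonempty x

/-- An edge vector: coordinates sum to 0, pairwise differences divisible by n+1,
and max minus min equals n+1. -/
def isEdge (n : ℕ) (e : Fin (n+1) → ℤ) : Prop :=
  inV n e ∧ maxC n e - minC n e = (n : ℤ) + 1

/-- Height of a vertex: (max − min)/(n+1). -/
def height (n : ℕ) (x : Fin (n+1) → ℤ) : ℤ :=
  (maxC n x - minC n x) / ((n : ℤ) + 1)

/-- The edge vector associated to a subset S: value n+1−|S| on S and −|S| off S. -/
def eVec (n : ℕ) (S : Finset (Fin (n+1))) : Fin (n+1) → ℤ :=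
  fun i => if i ∈ S then (n : ℤ) + 1 - S.card else -(S.card : ℤ)

lemma inV_zero (n : ℕ) : inV n 0 := ⟨by simp, fun i j => by simp⟩

lemma maxC_neg (n : ℕ) (x : Fin (n+1) → ℤ) : maxC n (-x) = - minC n x := by
  unfold maxC minC
  apply le_antisymm
  · apply Finset.sup'_le
    intro i hi
    have h1 : univ.inf' univ_nonempty x ≤ x i := Finset.inf'_le _ hi
    have h2 : (-x) i = -(x i) := rfl
    omega
  · obtain ⟨i, hi, h⟩ := Finset.exists_mem_eq_inf' (univ_nonempty) x
    rw [h]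
    have h1 : (-x) i ≤ univ.sup' univ_nonempty (-x) := Finset.le_sup' (-x) hi
    have h2 : (-x) i = -(x i) := rfl
    omega

lemma minC_neg (n : ℕ) (x : Fin (n+1) → ℤ) : minC n (-x) = - maxC n x := by
  have := maxC_neg n (-x)
  rw [neg_neg] at this
  unfold maxC minC at *
  omega

lemma isEdge_neg {n : ℕ} {e : Fin (n+1) → ℤ} (h : isEdge n e) : isEdge n (-e) := by
  obtain ⟨⟨h1, h2⟩, h3⟩ := h
  refine ⟨⟨by simp [h1], fun i j => by
    have h' : (-e) i - (-e) j = e j - e i := by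
      simp only [Pi.neg_apply]; ring
    rw [h']; exact h2 j i⟩, ?_⟩
  rw [maxC_neg, minC_neg]
  omega

/-- The graph G on V with edge-vector adjacency. -/
def G (n : ℕ) : SimpleGraph {x : Fin (n+1) → ℤ // inV n x} where
  Adj x y := isEdge n (y.1 - x.1)
  symm := by
    constructor
    intro x y h
    have := isEdge_neg h
    rwa [neg_sub] at this
  loopless := by
    constructor
    intro x h
    obtain ⟨-, h3⟩ := h
    rw [sub_self] at h3
    simp [maxC, minC] at h3
    omega

section Aux

variable {n : ℕ}

lemma le_maxC (x : Fin (n+1) → ℤ) (i : Fin (n+1)) : x i ≤ maxC n x :=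
  Finset.le_sup' x (Finset.mem_univ i)

lemma minC_le (x : Fin (n+1) → ℤ) (i : Fin (n+1)) : minC n x ≤ x i :=
  Finset.inf'_le x (Finset.mem_univ i)

lemma exists_maxC (x : Fin (n+1) → ℤ) : ∃ i, x i = maxC n x := by
  obtain ⟨i, -, h⟩ := Finset.exists_mem_eq_sup' (univ_nonempty) x
  exact ⟨i, h.symm⟩

lemma exists_minC (x : Fin (n+1) → ℤ) : ∃ i, x i = minC n x := by
  obtain ⟨i, -, h⟩ := Finset.exists_mem_eq_inf' (univ_nonempty) x
  exact ⟨i, h.symm⟩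

lemma minC_le_maxC (x : Fin (n+1) → ℤ) : minC n x ≤ maxC n x :=
  (minC_le x 0).trans (le_maxC x 0)

lemma dvd_spread {x : Fin (n+1) → ℤ} (hx : inV n x) :
    ((n : ℤ) + 1) ∣ maxC n x - minC n x := by
  obtain ⟨i, hi⟩ := exists_maxC x
  obtain ⟨j, hj⟩ := exists_minC x
  rw [← hi, ← hj]
  exact hx.2 i j

lemma eq_zero_of_spread_eq_zero {x : Fin (n+1) → ℤ} (hx : inV n x)
    (h : maxC n x - minC n x = 0) : x = 0 := by
  have hc : ∀ i, x i = maxC n x := fun i => by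
    have h1 := le_maxC x i
    have h2 := minC_le x i
    omega
  have hs : ∑ i, x i = ((n : ℤ) + 1) * maxC n x := by
    rw [Finset.sum_congr rfl (fun i _ => hc i), Finset.sum_const, card_univ,
      Fintype.card_fin, nsmul_eq_mul]
    push_cast
    ring
  rw [hx.1] at hs
  have hM : maxC n x = 0 := by
    rcases mul_eq_zero.mp hs.symm with h' | h'
    · exfalso; have : (0:ℤ) ≤ (n:ℤ) := Int.natCast_nonneg n; omega
    · exact h'
  funext i
  have := hc i
  simp [this, hM]

lemma inV_sub {x y : Fin (n+1) → ℤ} (hx : inV n x) (hy : inV n y) :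
    inV n (x - y) := by
  refine ⟨?_, fun i j => ?_⟩
  · simp only [Pi.sub_apply]
    rw [Finset.sum_sub_distrib, hx.1, hy.1]; ring
  · have h1 := hx.2 i j
    have h2 := hy.2 i j
    have : (x - y) i - (x - y) j = (x i - x j) - (y i - y j) := by
      simp only [Pi.sub_apply]; ring
    rw [this]
    exact dvd_sub h1 h2

lemma inV_add {x y : Fin (n+1) → ℤ} (hx : inV n x) (hy : inV n y) :
    inV n (x + y) := by
  refine ⟨?_, fun i j => ?_⟩
  · simp only [Pi.add_apply]
    rw [Finset.sum_add_distrib, hx.1, hy.1]; ring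
  · have h1 := hx.2 i j
    have h2 := hy.2 i j
    have : (x + y) i - (x + y) j = (x i - x j) + (y i - y j) := by
      simp only [Pi.add_apply]; ring
    rw [this]
    exact dvd_add h1 h2

lemma spread_zero : maxC n (0 : Fin (n+1) → ℤ) - minC n 0 = 0 := by
  have h1 : maxC n (0 : Fin (n+1) → ℤ) = 0 := by
    unfold maxC; exact Finset.sup'_const _ _
  have h2 : minC n (0 : Fin (n+1) → ℤ) = 0 := by
    unfold minC; exact Finset.inf'_const _ _
  omega

/-- The key step: from a nonzero vertex one can subtract an edge vector
decreasing the spread by exactly n+1. -/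
lemma step {x : Fin (n+1) → ℤ} (hx : inV n x) (hne : maxC n x - minC n x ≠ 0) :
    ∃ e, isEdge n e ∧ inV n (x - e) ∧
      maxC n (x - e) - minC n (x - e) = maxC n x - minC n x - ((n : ℤ) + 1) := by
  set M := maxC n x with hM
  set m := minC n x with hm
  have hmM : m ≤ M := minC_le_maxC x
  have hdvd := dvd_spread hx
  have hpos : (0 : ℤ) < (n : ℤ) + 1 := by positivity
  have hMm : m + ((n : ℤ) + 1) ≤ M := by
    have h1 : (0 : ℤ) < M - m := by omega
    have := Int.le_of_dvd h1 hdvd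
    omega
  obtain ⟨i0, hi0⟩ := exists_maxC x
  obtain ⟨j0, hj0⟩ := exists_minC x
  rw [← hM] at hi0
  rw [← hm] at hj0
  set S : Finset (Fin (n+1)) := univ.filter (fun i => x i = M) with hS
  have hmemS : ∀ i, i ∈ S ↔ x i = M := by
    intro i; simp [hS]
  set k := S.card with hk
  have hi0S : i0 ∈ S := (hmemS i0).mpr hi0
  have hj0S : j0 ∉ S := by
    rw [hmemS]
    omega
  have hk1 : 1 ≤ k := Finset.card_pos.mpr ⟨i0, hi0S⟩
  have hkle : k ≤ n + 1 := by
    have := Finset.card_le_card (Finset.subset_univ S)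
    simpa using this
  have hk2 : k ≤ n := by
    rcases Nat.lt_or_ge k (n+1) with h | h
    · omega
    · exfalso
      have : S = univ := Finset.eq_univ_of_card S (by simp; omega)
      exact hj0S (this ▸ Finset.mem_univ j0)
  have hcompl : (Sᶜ.card : ℤ) = (n : ℤ) + 1 - k := by
    rw [Finset.card_compl]
    simp only [Fintype.card_fin, ← hk]
    push_cast [Nat.cast_sub hkle]
    ring
  set e := eVec n S with he
  have heS : ∀ i ∈ S, e i = (n : ℤ) + 1 - k := fun i hi => by simp [he, eVec, hi, hk]
  have heS' : ∀ i ∉ S, e i = -(k : ℤ) := fun i hi => by simp [he, eVec, hi, hk]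
  have hsum : ∑ i, e i = 0 := by
    rw [← Finset.sum_add_sum_compl S]
    rw [Finset.sum_congr rfl heS, Finset.sum_const]
    rw [Finset.sum_congr rfl (fun i hi => heS' i (by simpa using hi)), Finset.sum_const]
    rw [nsmul_eq_mul, nsmul_eq_mul, hcompl, ← hk]
    ring
  have hmaxe : maxC n e = (n : ℤ) + 1 - k := by
    apply le_antisymm
    · apply Finset.sup'_le
      intro i _
      by_cases hi : i ∈ S
      · rw [heS i hi]
      · rw [heS' i hi]
        have : (k : ℤ) ≤ (n : ℤ) + 1 := by exact_mod_cast hkle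
        omega
    · rw [← heS i0 hi0S]; exact le_maxC e i0
  have hmine : minC n e = -(k : ℤ) := by
    apply le_antisymm
    · rw [← heS' j0 hj0S]; exact minC_le e j0
    · apply Finset.le_inf'
      intro i _
      by_cases hi : i ∈ S
      · rw [heS i hi]
        have : (k : ℤ) ≤ (n : ℤ) + 1 := by exact_mod_cast hkle
        omega
      · rw [heS' i hi]
  have hedge : isEdge n e := by
    refine ⟨⟨hsum, fun i j => ?_⟩, by rw [hmaxe, hmine]; ring⟩
    by_cases hi : i ∈ S <;> by_cases hj : j ∈ S
    · rw [heS i hi, heS j hj]; simp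
    · rw [heS i hi, heS' j hj]
      exact ⟨1, by ring⟩
    · rw [heS' i hi, heS j hj]
      exact ⟨-1, by ring⟩
    · rw [heS' i hi, heS' j hj]; simp
  have hlow : ∀ i, i ∉ S → x i ≤ M - ((n : ℤ) + 1) := by
    intro i hi
    have h1 : x i ≠ M := fun h => hi ((hmemS i).mpr h)
    have h2 : x i ≤ M := le_maxC x i
    have h3 : ((n : ℤ) + 1) ∣ M - x i := by
      rw [← hi0]; exact hx.2 i0 i
    have h4 : (0 : ℤ) < M - x i := by omega
    have := Int.le_of_dvd h4 h3
    omega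
  have hmax' : maxC n (x - e) = M - ((n : ℤ) + 1) + k := by
    apply le_antisymm
    · apply Finset.sup'_le
      intro i _
      simp only [Pi.sub_apply]
      by_cases hi : i ∈ S
      · rw [heS i hi, (hmemS i).mp hi]; omega
      · rw [heS' i hi]
        have := hlow i hi
        omega
    · have : (x - e) i0 = M - ((n : ℤ) + 1) + k := by
        simp only [Pi.sub_apply, heS i0 hi0S, hi0]; ring
      rw [← this]; exact le_maxC _ i0
  have hmin' : minC n (x - e) = m + k := by
    apply le_antisymm
    · have : (x - e) j0 = m + k := by
        simp only [Pi.sub_apply, heS' j0 hj0S, hj0]; ring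
      rw [← this]; exact minC_le _ j0
    · apply Finset.le_inf'
      intro i _
      simp only [Pi.sub_apply]
      by_cases hi : i ∈ S
      · rw [heS i hi, (hmemS i).mp hi]
        omega
      · rw [heS' i hi]
        have := minC_le x i
        omega
  exact ⟨e, hedge, inV_sub hx hedge.1, by rw [hmax', hmin']; ring⟩

/-- Lipschitz property: adding an edge vector decreases the spread by at most n+1. -/
lemma lipschitz {x e : Fin (n+1) → ℤ} (he : isEdge n e) :
    maxC n x - minC n x - ((n : ℤ) + 1) ≤ maxC n (x + e) - minC n (x + e) := by
  obtain ⟨i0, hi0⟩ := exists_maxC x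
  obtain ⟨j0, hj0⟩ := exists_minC x
  have h1 : maxC n x + minC n e ≤ maxC n (x + e) := by
    have : x i0 + e i0 ≤ maxC n (x + e) := le_maxC (x + e) i0
    have h2 := minC_le e i0
    omega
  have h2 : minC n (x + e) ≤ minC n x + maxC n e := by
    have : minC n (x + e) ≤ x j0 + e j0 := minC_le (x + e) j0
    have h3 := le_maxC e j0
    omega
  have := he.2
  omega

lemma exists_walk (h : ℕ) : ∀ (x y : {x : Fin (n+1) → ℤ // inV n x}),
    maxC n (x.1 - y.1) - minC n (x.1 - y.1) = ((n : ℤ) + 1) * h →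
    ∃ w : (G n).Walk x y, w.length = h := by
  induction h with
  | zero =>
    intro x y hxy
    simp only [Nat.cast_zero, mul_zero] at hxy
    have hz : x.1 - y.1 = 0 :=
      eq_zero_of_spread_eq_zero (inV_sub x.2 y.2) hxy
    have : x = y := Subtype.ext (by have := sub_eq_zero.mp hz; exact this)
    subst this
    exact ⟨SimpleGraph.Walk.nil, rfl⟩
  | succ h ih =>
    intro x y hxy
    have hne : maxC n (x.1 - y.1) - minC n (x.1 - y.1) ≠ 0 := by
      rw [hxy]
      have : (0:ℤ) < ((n : ℤ) + 1) * (h + 1 : ℕ) := by positivity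
      omega
    obtain ⟨e, hedge, hinv, hspread⟩ := step (inV_sub x.2 y.2) hne
    have hx'v : inV n (x.1 - e) := by
      have : x.1 - e = (x.1 - y.1 - e) + y.1 := by ring
      rw [this]
      exact inV_add hinv y.2
    set x' : {x : Fin (n+1) → ℤ // inV n x} := ⟨x.1 - e, hx'v⟩ with hx'
    have hadj : (G n).Adj x x' := by
      show isEdge n (x'.1 - x.1)
      have : x'.1 - x.1 = -e := by rw [hx']; ring
      rw [this]
      exact isEdge_neg hedge
    have hsub : x'.1 - y.1 = x.1 - y.1 - e := by rw [hx']; ring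
    have : maxC n (x'.1 - y.1) - minC n (x'.1 - y.1) = ((n : ℤ) + 1) * h := by
      rw [hsub, hspread, hxy]
      push_cast
      ring
    obtain ⟨w, hw⟩ := ih x' y this
    exact ⟨SimpleGraph.Walk.cons hadj w, by simp [hw]⟩

lemma walk_lower {x y : {x : Fin (n+1) → ℤ // inV n x}} (w : (G n).Walk x y) :
    maxC n (x.1 - y.1) - minC n (x.1 - y.1) ≤ ((n : ℤ) + 1) * w.length := by
  induction w with
  | nil =>
    simp only [sub_self, SimpleGraph.Walk.length_nil, Nat.cast_zero, mul_zero]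
    rw [spread_zero]
  | @cons a b c hadj w ih =>
    have he : isEdge n (b.1 - a.1) := hadj
    have key := lipschitz (x := a.1 - c.1) (e := b.1 - a.1) he
    have heq : a.1 - c.1 + (b.1 - a.1) = b.1 - c.1 := by ring
    rw [heq] at key
    simp only [SimpleGraph.Walk.length_cons]
    push_cast
    have : ((n : ℤ) + 1) * (w.length + 1) = ((n : ℤ) + 1) * w.length + ((n : ℤ) + 1) := by
      ring
    rw [this]
    omega

end Aux

/-- the graph distance between x and y equals
(max(x−y) − min(x−y))/(n+1). -/
theorem stmt11 (n : ℕ) (hn : 1 ≤ n) (x y : {x : Fin (n+1) → ℤ // inV n x}) :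
    ((G n).dist x y : ℤ) =
      (maxC n (x.1 - y.1) - minC n (x.1 - y.1)) / ((n : ℤ) + 1) := by
  have hpos : (0 : ℤ) < (n : ℤ) + 1 := by positivity
  obtain ⟨c, hc⟩ := dvd_spread (inV_sub x.2 y.2)
  have hD0 : 0 ≤ maxC n (x.1 - y.1) - minC n (x.1 - y.1) := by
    have := minC_le_maxC (x.1 - y.1); omega
  have hc0 : 0 ≤ c := by
    by_contra hcon
    push_neg at hcon
    have : ((n : ℤ) + 1) * c < 0 := mul_neg_of_pos_of_neg hpos hcon
    omega
  have hch : (c.toNat : ℤ) = c := Int.toNat_of_nonneg hc0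
  have hDh : maxC n (x.1 - y.1) - minC n (x.1 - y.1) = ((n : ℤ) + 1) * (c.toNat : ℕ) := by
    rw [hc, hch]
  obtain ⟨w, hw⟩ := exists_walk c.toNat x y hDh
  have hle : (G n).dist x y ≤ c.toNat := hw ▸ SimpleGraph.dist_le w
  have hreach : (G n).Reachable x y := ⟨w⟩
  obtain ⟨p, hp⟩ := hreach.exists_walk_length_eq_dist
  have hlow := walk_lower p
  rw [hp, hDh] at hlow
  have hge : c.toNat ≤ (G n).dist x y := by
    have := (mul_le_mul_iff_right₀ hpos).mp hlow
    exact_mod_cast this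
  have hdist : (G n).dist x y = c.toNat := le_antisymm hle hge
  rw [hdist, hDh, Int.mul_ediv_cancel_left _ (by omega : ((n : ℤ) + 1) ≠ 0)]
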